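/- Let G be a simplicial group. In the crossed square M(G,2) with corner groups L = NG₂/∂₃(NG₃), M = Ker d₀¹, N = Ker d₁¹, P = G₁, the kernel of the morphism of crossed modules μ₁ : (L → N) → (M → P) is isomorphic to (π₂(G) → 1); explicitly, Ker(L → N) = (NG₂ ∩ Ker d₂²)/∂₃(NG₃) ≅ π₂(G), and Ker(M → P) is trivial. -/

import Mathlib

section

variable {G : ℕ → Type*} [∀ n, Group (G n)] (d : ∀ n : ℕ, ℕ → (G (n + 1) →* G n))

/-- `NG₂ = Ker d₀² ∩ Ker d₁²`. -/
def mooreTwo : Subgroup (G 2) := (d 1 0).ker ⊓ (d 1 1).ker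

/-- `∂₃(NG₃) = d₃³(Ker d₀³ ∩ Ker d₁³ ∩ Ker d₂³)`. -/
def boundaryThree : Subgroup (G 2) :=
  Subgroup.map (d 2 3) ((d 2 0).ker ⊓ (d 2 1).ker ⊓ (d 2 2).ker)

/-- `∩_{i=0}^{2} Ker dᵢ² = NG₂ ∩ Ker d₂²`, the numerator of `π₂(G)`. -/
def mooreTwoCap : Subgroup (G 2) := mooreTwo d ⊓ (d 1 2).ker

/-- For a simplicial group `G`, in the crossed square `M(G,2)` with corner
groups `L = NG₂/∂₃(NG₃)`, `M = Ker d₀¹`, `N = Ker d₁¹`, `P = G₁`: the kernel of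
the morphism of crossed modules `μ₁ : (L → N) → (M → P)` is `(π₂(G) → 1)`.
Explicitly: `∂₃(NG₃)` is a normal subgroup of `NG₂` contained in
`NG₂ ∩ Ker d₂²`; the map `L → N` induced by `d₂²` has kernel
`(NG₂ ∩ Ker d₂²)/∂₃(NG₃) ≅ π₂(G)`; and `M → P`, being an inclusion, has trivial
kernel. -/
theorem crossed_square_kernel_pi_two {G : ℕ → Type*} [∀ n, Group (G n)]
    (d : ∀ n : ℕ, ℕ → (G (n + 1) →* G n))
    (s : ∀ n : ℕ, ℕ → (G n →* G (n + 1)))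
    (dd : ∀ (n i j : ℕ), i ≤ j → j ≤ n + 1 → ∀ x : G (n + 2),
      d n i (d (n + 1) (j + 1) x) = d n j (d (n + 1) i x))
    (ds_eq : ∀ (n j : ℕ) (x : G n), d n j (s n j x) = x)
    (ds_eq' : ∀ (n j : ℕ) (x : G n), d n (j + 1) (s n j x) = x)
    (ds_lt : ∀ (n i k : ℕ), i ≤ k → ∀ x : G (n + 1),
      d (n + 1) i (s (n + 1) (k + 1) x) = s n k (d n i x))
    (ds_gt : ∀ (n j k : ℕ), j ≤ k → ∀ x : G (n + 1),
      d (n + 1) (k + 2) (s (n + 1) j x) = s n j (d n (k + 1) x))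
    (ss : ∀ (n i j : ℕ), i ≤ j → ∀ x : G n,
      s (n + 1) i (s n j x) = s (n + 1) (j + 1) (s n i x)) :
    -- `∂₃(NG₃) ⊆ NG₂ ∩ Ker d₂²`
    boundaryThree d ≤ mooreTwoCap d ∧
    -- `∂₃(NG₃)` is normal in `NG₂`
    Subgroup.closure {x : ↥(mooreTwo d) | (x : G 2) ∈ boundaryThree d}
      = Subgroup.normalClosure {x : ↥(mooreTwo d) | (x : G 2) ∈ boundaryThree d} ∧
    -- the induced map `L = NG₂/∂₃NG₃ → N` has kernel `(NG₂ ∩ Ker d₂²)/∂₃NG₃ ≅ π₂(G)`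
    (∃ ψ : (↥(mooreTwo d) ⧸ Subgroup.normalClosure
        {x : ↥(mooreTwo d) | (x : G 2) ∈ boundaryThree d}) →* G 1,
      (∀ x : ↥(mooreTwo d), ψ (QuotientGroup.mk x) = d 1 2 (x : G 2)) ∧
      (∀ q, ψ q = 1 ↔ ∃ x : ↥(mooreTwo d),
        QuotientGroup.mk x = q ∧ d 1 2 (x : G 2) = 1) ∧
      Nonempty (↥ψ.ker ≃* (↥(mooreTwoCap d) ⧸ Subgroup.normalClosure
        {x : ↥(mooreTwoCap d) | (x : G 2) ∈ boundaryThree d}))) ∧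
    -- `Ker (M → P)` is trivial: the inclusion `Ker d₀¹ → G₁` is injective
    Function.Injective ((d 0 0).ker.subtype) := by

  classical
  -- Part 1: boundaryThree ≤ mooreTwoCap
  have hsub : boundaryThree d ≤ mooreTwoCap d := by
    rintro y hy
    obtain ⟨x, hx, rfl⟩ := hy
    rw [SetLike.mem_coe, Subgroup.mem_inf, Subgroup.mem_inf, MonoidHom.mem_ker,
      MonoidHom.mem_ker, MonoidHom.mem_ker] at hx
    obtain ⟨⟨h0, h1⟩, h2⟩ := hx
    have key : ∀ i, i ≤ 2 → d 2 i x = 1 → d 1 i (d 2 3 x) = 1 := by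
      intro i hi hxx
      have h := dd 1 i 2 hi (by norm_num) x
      rw [hxx, map_one] at h
      exact h
    rw [mooreTwoCap, mooreTwo, Subgroup.mem_inf, Subgroup.mem_inf, MonoidHom.mem_ker,
      MonoidHom.mem_ker, MonoidHom.mem_ker]
    exact ⟨⟨key 0 (by norm_num) h0, key 1 (by norm_num) h1⟩, key 2 le_rfl h2⟩
  -- conjugation stability
  have hconj : ∀ g ∈ mooreTwo d, ∀ y ∈ boundaryThree d,
      g * y * g⁻¹ ∈ boundaryThree d := by
    intro g hg y hy
    rw [mooreTwo, Subgroup.mem_inf, MonoidHom.mem_ker, MonoidHom.mem_ker] at hg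
    obtain ⟨hg0, hg1⟩ := hg
    obtain ⟨z, hz, rfl⟩ := hy
    rw [SetLike.mem_coe, Subgroup.mem_inf, Subgroup.mem_inf, MonoidHom.mem_ker,
      MonoidHom.mem_ker, MonoidHom.mem_ker] at hz
    obtain ⟨⟨hz0, hz1⟩, hz2⟩ := hz
    have hs0 : d 2 0 (s 2 2 g) = 1 := by
      have h := ds_lt 1 0 1 (by norm_num) g
      rw [hg0, map_one] at h
      exact h
    have hs1 : d 2 1 (s 2 2 g) = 1 := by
      have h := ds_lt 1 1 1 le_rfl g
      rw [hg1, map_one] at h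
      exact h
    have hs2 : d 2 2 (s 2 2 g) = g := ds_eq 2 2 g
    have hs3 : d 2 3 (s 2 2 g) = g := ds_eq' 2 2 g
    refine ⟨s 2 2 g * z * (s 2 2 g)⁻¹, ?_, ?_⟩
    · rw [SetLike.mem_coe, Subgroup.mem_inf, Subgroup.mem_inf, MonoidHom.mem_ker,
        MonoidHom.mem_ker, MonoidHom.mem_ker]
      refine ⟨⟨?_, ?_⟩, ?_⟩
      · rw [map_mul, map_mul, map_inv, hs0, hz0]; group
      · rw [map_mul, map_mul, map_inv, hs1, hz1]; group
      · rw [map_mul, map_mul, map_inv, hs2, hz2]; group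
    · rw [map_mul, map_mul, map_inv, hs3]
  -- the comap subgroups
  set S : Set ↥(mooreTwo d) := {x : ↥(mooreTwo d) | (x : G 2) ∈ boundaryThree d} with hS
  set K : Subgroup ↥(mooreTwo d) := (boundaryThree d).comap (mooreTwo d).subtype with hK
  have hSK : S = (K : Set ↥(mooreTwo d)) := rfl
  have hKnormal : K.Normal := by
    constructor
    intro n hn g
    have : ((g * n * g⁻¹ : ↥(mooreTwo d)) : G 2)
        = (g : G 2) * (n : G 2) * (g : G 2)⁻¹ := rfl
    simp only [hK, Subgroup.mem_comap, Subgroup.coe_subtype] at hn ⊢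
    rw [this]
    exact hconj _ g.2 _ hn
  have hclK : Subgroup.closure S = K := by rw [hSK, Subgroup.closure_eq]
  have hncl : Subgroup.closure S = Subgroup.normalClosure S := by
    refine le_antisymm (Subgroup.closure_le _ |>.mpr Subgroup.subset_normalClosure) ?_
    rw [hclK]
    exact Subgroup.normalClosure_le_normal (le_of_eq hSK)
  have hnclK : Subgroup.normalClosure S = K := hncl ▸ hclK
  refine ⟨hsub, hncl, ?_, Subgroup.subtype_injective _⟩
  -- Part 3
  have hker : ∀ x ∈ Subgroup.normalClosure S,
      ((d 1 2).comp (mooreTwo d).subtype) x = 1 := by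
    intro x hx
    rw [hnclK] at hx
    exact (hsub hx).2
  refine ⟨QuotientGroup.lift _ _ hker, fun x => rfl, ?_, ?_⟩
  · intro q
    constructor
    · intro hq
      obtain ⟨x, rfl⟩ := QuotientGroup.mk_surjective q
      exact ⟨x, rfl, hq⟩
    · rintro ⟨x, rfl, hx⟩
      exact hx
  · -- the isomorphism
    set ψ := QuotientGroup.lift _ _ hker with hψ
    set S' : Set ↥(mooreTwoCap d) :=
      {x : ↥(mooreTwoCap d) | (x : G 2) ∈ boundaryThree d} with hS'
    set K' : Subgroup ↥(mooreTwoCap d) :=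
      (boundaryThree d).comap (mooreTwoCap d).subtype with hK'
    have hS'K' : S' = (K' : Set ↥(mooreTwoCap d)) := rfl
    have hK'normal : K'.Normal := by
      constructor
      intro n hn g
      have : ((g * n * g⁻¹ : ↥(mooreTwoCap d)) : G 2)
          = (g : G 2) * (n : G 2) * (g : G 2)⁻¹ := rfl
      simp only [hK', Subgroup.mem_comap, Subgroup.coe_subtype] at hn ⊢
      rw [this]
      exact hconj _ g.2.1 _ hn
    have hclK' : Subgroup.normalClosure S' = K' := by
      refine le_antisymm (Subgroup.normalClosure_le_normal (le_of_eq hS'K')) ?_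
      rw [hS'K']
      exact fun x hx => Subgroup.subset_normalClosure hx
    -- the map φ : cap → ψ.ker
    have hcapmem : ∀ x : ↥(mooreTwoCap d),
        ((QuotientGroup.mk' (Subgroup.normalClosure S)).comp
          (Subgroup.inclusion (inf_le_left : mooreTwoCap d ≤ mooreTwo d))) x ∈ ψ.ker := by
      intro x
      simp only [MonoidHom.mem_ker, MonoidHom.comp_apply, QuotientGroup.mk'_apply]
      exact x.2.2
    set φ := ((QuotientGroup.mk' (Subgroup.normalClosure S)).comp
      (Subgroup.inclusion (inf_le_left : mooreTwoCap d ≤ mooreTwo d))).codRestrict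
      ψ.ker hcapmem with hφ
    have hφsurj : Function.Surjective φ := by
      rintro ⟨q, hq⟩
      obtain ⟨y, rfl⟩ := QuotientGroup.mk_surjective q
      have hy : d 1 2 (y : G 2) = 1 := hq
      refine ⟨⟨(y : G 2), ⟨y.2, hy⟩⟩, ?_⟩
      ext
      rfl
    have hφker : φ.ker = Subgroup.normalClosure S' := by
      rw [hclK']
      ext x
      simp only [hφ, MonoidHom.mem_ker, MonoidHom.comp_apply]
      constructor
      · intro h
        have h2 : (QuotientGroup.mk' (Subgroup.normalClosure S))
            (Subgroup.inclusion inf_le_left x) = 1 := congrArg Subtype.val h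
        rw [QuotientGroup.mk'_apply, QuotientGroup.eq_one_iff, hnclK] at h2
        exact h2
      · intro h
        apply Subtype.ext
        show (QuotientGroup.mk' (Subgroup.normalClosure S))
            (Subgroup.inclusion inf_le_left x) = 1
        rw [QuotientGroup.mk'_apply, QuotientGroup.eq_one_iff, hnclK]
        exact h
    exact ⟨((QuotientGroup.quotientKerEquivOfSurjective φ hφsurj).symm.trans
      (@QuotientGroup.quotientMulEquivOfEq _ _ _ _ _ Subgroup.normalClosure_normal hφker))⟩


end
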